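/- Let g > 1 be real, λ ∈ (0,1), M ≥ 1 an integer, and c ∈ (0,1). Consider the real 4×4 matrix R = [[c²·f_{0,0,0}(g,λ), 0, 0, 0], [0, c²·f_{0,0,M}(g,λ), c·√(1−c²)·f_{0,M,M}(g,λ), 0], [0, c·√(1−c²)·f_{M,0,0}(g,λ), (1−c²)·f_{M,M,0}(g,λ), 0], [0, 0, 0, (1−c²)·f_{M,M,M}(g,λ)]] (the partial transpose of the two-qubit state ρ^{(g,λ,M,c)} shared by Alice and Bob after the post-selection step of the entanglement distribution protocol). Then R is positive semidefinite if and only if (1 − λ)·g ≥ 1. -/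

import Mathlib

open Finset

/-- The coefficient `f_{n,i,l}(g,λ)` appearing in the action of the channel
`N_{g,λ} = Φ_{g,0} ∘ E_{λ,0}` on Fock-basis matrix units:
`f_{n,i,l}(g,λ) = ∑_{m=max(i−l,0)}^{min(n,i)} (√(n!·i!·l!·(l+n−i)!)/((n−m)!·(i−m)!·m!·(l+m−i)!))
  · (g−1)^{l+m−i} · (1−λ)^m · λ^{(n+i−2m)/2} / g^{l+1+(n−i)/2}`,
where half-integer powers are real powers of nonnegative reals and `0⁰ = 1`. -/
noncomputable def fcoef (g lam : ℝ) (n i l : ℕ) : ℝ :=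
  ∑ m ∈ Finset.Icc (i - l) (min n i),
    Real.sqrt ((n.factorial * i.factorial * l.factorial * (l + n - i).factorial : ℕ)) /
        ((n - m).factorial * (i - m).factorial * m.factorial * (l + m - i).factorial : ℕ)
      * (g - 1) ^ (l + m - i) * (1 - lam) ^ m
      * lam ^ (((n : ℝ) + (i : ℝ) - 2 * (m : ℝ)) / 2)
      / g ^ ((l : ℝ) + 1 + ((n : ℝ) - (i : ℝ)) / 2)

lemma fcoef_00M (g lam : ℝ) (M : ℕ) :
    fcoef g lam 0 0 M = (g - 1) ^ M / g ^ (M + 1) := by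
  simp only [fcoef]
  rw [show (0 : ℕ) - M = 0 by simp, show min 0 0 = 0 from rfl, Finset.Icc_self,
    Finset.sum_singleton]
  simp [Nat.cast_mul, Real.sqrt_mul_self (by positivity : (0:ℝ) ≤ (M.factorial : ℝ))]
  rw [show ((M:ℝ)+1) = ((M+1:ℕ):ℝ) by push_cast; ring, Real.rpow_natCast,
    div_self (by positivity : (M.factorial : ℝ) ≠ 0), one_mul]

lemma fcoef_0MM (g lam : ℝ) (M : ℕ) :
    fcoef g lam 0 M M = lam ^ ((M:ℝ)/2) / g ^ ((M:ℝ)/2 + 1) := by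
  simp only [fcoef]
  rw [show M - M = 0 by simp, show min 0 M = 0 from Nat.min_eq_left (Nat.zero_le M),
    Finset.Icc_self, Finset.sum_singleton]
  simp [Nat.cast_mul, Real.sqrt_mul_self (by positivity : (0:ℝ) ≤ (M.factorial : ℝ))]
  rw [div_self (by positivity : (M.factorial : ℝ) ≠ 0), one_mul,
    show (M:ℝ) + 1 + -(M:ℝ)/2 = (M:ℝ)/2 + 1 by ring]

lemma fcoef_M00 (g lam : ℝ) (M : ℕ) :
    fcoef g lam M 0 0 = lam ^ ((M:ℝ)/2) / g ^ ((M:ℝ)/2 + 1) := by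
  simp only [fcoef]
  rw [show (0:ℕ) - 0 = 0 by simp, show min M 0 = 0 from Nat.min_eq_right (Nat.zero_le M),
    Finset.Icc_self, Finset.sum_singleton]
  simp [Nat.cast_mul, Real.sqrt_mul_self (by positivity : (0:ℝ) ≤ (M.factorial : ℝ))]
  rw [div_self (by positivity : (M.factorial : ℝ) ≠ 0), one_mul, add_comm (1:ℝ)]

lemma fcoef_MM0 (g lam : ℝ) (M : ℕ) :
    fcoef g lam M M 0 = (1 - lam) ^ M / g := by
  simp only [fcoef]
  rw [show M - 0 = M by simp, show min M M = M from min_self M,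
    Finset.Icc_self, Finset.sum_singleton]
  simp [Nat.cast_mul, Real.sqrt_mul_self (by positivity : (0:ℝ) ≤ (M.factorial : ℝ))]
  rw [show ((M:ℝ) + (M:ℝ) - 2*(M:ℝ))/2 = 0 by ring, Real.rpow_zero, mul_one,
    div_self (by positivity : (M.factorial : ℝ) ≠ 0), one_mul]

lemma fcoef_nonneg (g lam : ℝ) (hg : 1 ≤ g) (hlam0 : 0 ≤ lam) (hlam1 : lam ≤ 1)
    (n i l : ℕ) : 0 ≤ fcoef g lam n i l := by
  apply Finset.sum_nonneg
  intro m hm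
  have h1 : (0:ℝ) ≤ g - 1 := by linarith
  have h2 : (0:ℝ) ≤ 1 - lam := by linarith
  have h3 : (0:ℝ) < g := by linarith
  positivity

lemma rpow_half_sq (lam : ℝ) (hl : 0 ≤ lam) (M : ℕ) :
    (lam ^ ((M:ℝ)/2))^2 = lam ^ M := by
  rw [← Real.rpow_natCast (lam ^ ((M:ℝ)/2)) 2, ← Real.rpow_mul hl]
  rw [show (M:ℝ)/2 * ((2:ℕ):ℝ) = ((M:ℕ):ℝ) by push_cast; ring, Real.rpow_natCast]

lemma rpow_half_add_one_sq (g : ℝ) (hg : 0 ≤ g) (M : ℕ) :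
    (g ^ ((M:ℝ)/2+1))^2 = g ^ (M+2) := by
  rw [← Real.rpow_natCast (g ^ ((M:ℝ)/2+1)) 2, ← Real.rpow_mul hg]
  rw [show ((M:ℝ)/2+1) * ((2:ℕ):ℝ) = ((M+2:ℕ):ℝ) by push_cast; ring, Real.rpow_natCast]

set_option maxHeartbeats 1000000 in
/-- The partial transpose `R` of the two-qubit state `ρ^{(g,λ,M,c)}` shared by Alice and Bob
after the post-selection step of the entanglement distribution protocol is positive
semidefinite if and only if `(1−λ)g ≥ 1`. -/
theorem stmt3 (g lam : ℝ) (hg : 1 < g) (hlam : lam ∈ Set.Ioo (0 : ℝ) 1)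
    (M : ℕ) (hM : 1 ≤ M) (c : ℝ) (hc : c ∈ Set.Ioo (0 : ℝ) 1)
    (R : Matrix (Fin 4) (Fin 4) ℝ)
    (hR : R = !![c ^ 2 * fcoef g lam 0 0 0, 0, 0, 0;
      0, c ^ 2 * fcoef g lam 0 0 M, c * Real.sqrt (1 - c ^ 2) * fcoef g lam 0 M M, 0;
      0, c * Real.sqrt (1 - c ^ 2) * fcoef g lam M 0 0, (1 - c ^ 2) * fcoef g lam M M 0, 0;
      0, 0, 0, (1 - c ^ 2) * fcoef g lam M M M]) :
    R.PosSemidef ↔ (1 - lam) * g ≥ 1 := by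
  obtain ⟨hl0, hl1⟩ := hlam
  obtain ⟨hc0, hc1⟩ := hc
  have hg0 : (0:ℝ) < g := by linarith
  have hc2 : (0:ℝ) < 1 - c^2 := by nlinarith
  have hs2 : Real.sqrt (1 - c^2) ^ 2 = 1 - c^2 := Real.sq_sqrt hc2.le
  have hbeq : fcoef g lam M 0 0 = fcoef g lam 0 M M := by
    rw [fcoef_0MM, fcoef_M00]
  rw [hbeq] at hR
  -- abbreviations for the 2×2 middle block
  set a : ℝ := c ^ 2 * fcoef g lam 0 0 M with ha
  set e : ℝ := c * Real.sqrt (1 - c ^ 2) * fcoef g lam 0 M M with he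
  set d : ℝ := (1 - c ^ 2) * fcoef g lam M M 0 with hd
  set p : ℝ := c ^ 2 * fcoef g lam 0 0 0 with hp
  set q : ℝ := (1 - c ^ 2) * fcoef g lam M M M with hq
  have h0p : 0 ≤ p := by
    have := fcoef_nonneg g lam hg.le hl0.le hl1.le 0 0 0
    rw [hp]; positivity
  have h0q : 0 ≤ q := by
    have := fcoef_nonneg g lam hg.le hl0.le hl1.le M M M
    rw [hq]; positivity
  have hapos : 0 < a := by
    rw [ha, fcoef_00M]
    have : (0:ℝ) < g - 1 := by linarith
    positivity
  have hAD : a * d = c^2 * (1-c^2) * ((g-1)*(1-lam))^M / g^(M+2) := by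
    rw [ha, hd, fcoef_00M, fcoef_MM0, mul_pow]
    field_simp
    ring
  have hE2 : e^2 = c^2 * (1-c^2) * lam^M / g^(M+2) := by
    rw [he, fcoef_0MM, mul_pow, mul_pow, hs2, div_pow,
      rpow_half_sq lam hl0.le M, rpow_half_add_one_sq g hg0.le M]
    ring
  have hfac : (0:ℝ) < c^2 * (1-c^2) / g^(M+2) := by positivity
  clear_value a e d p q
  have key : (e^2 ≤ a * d) ↔ ((1 - lam) * g ≥ 1) := by
    rw [hAD, hE2]
    have hpos : (0:ℝ) < g ^ (M+2) := by positivity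
    have hcc : (0:ℝ) < c^2 * (1-c^2) := by positivity
    constructor
    · intro h
      have h2 : lam ^ M ≤ ((g-1)*(1-lam)) ^ M :=
        (mul_le_mul_iff_right₀ hcc).mp ((div_le_div_iff_of_pos_right hpos).mp h)
      have h3 : lam ≤ (g-1)*(1-lam) :=
        (pow_le_pow_iff_left₀ hl0.le
          (by nlinarith [h2, pow_nonneg hl0.le M] : (0:ℝ) ≤ (g-1)*(1-lam))
          (by omega : M ≠ 0)).mp h2
      nlinarith [h3]
    · intro h
      have h3 : lam ≤ (g-1)*(1-lam) := by nlinarith [h]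
      have h2 : lam ^ M ≤ ((g-1)*(1-lam)) ^ M := pow_le_pow_left₀ hl0.le h3 M
      exact (div_le_div_iff_of_pos_right hpos).mpr ((mul_le_mul_iff_right₀ hcc).mpr h2)
  rw [← key]
  constructor
  · intro h
    have h2 := h.dotProduct_mulVec_nonneg ![0, e, -a, 0]
    rw [hR] at h2
    simp [dotProduct, Matrix.mulVec, Fin.sum_univ_four,
      Matrix.vecHead, Matrix.vecTail] at h2
    nlinarith [h2, hapos]
  · intro hdet
    refine Matrix.PosSemidef.of_dotProduct_mulVec_nonneg ?_ ?_
    · rw [hR]; unfold Matrix.IsHermitian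
      ext i j
      fin_cases i <;> fin_cases j <;>
        simp [Matrix.conjTranspose_apply, Matrix.vecHead, Matrix.vecTail]
    · intro x
      rw [hR]
      simp [dotProduct, Matrix.mulVec, Fin.sum_univ_four,
        Matrix.vecHead, Matrix.vecTail]
      nlinarith [sq_nonneg (a * x 1 + e * x 2),
        mul_nonneg h0p (sq_nonneg (x 0)), mul_nonneg h0q (sq_nonneg (x 3)),
        mul_nonneg (sub_nonneg.mpr hdet) (sq_nonneg (x 2)), hapos.le]
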